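/- Let x₀, y₀ ∈ ℝ, let g : [x₀,∞) × [y₀,∞) → ℝ and K : [x₀,∞) × [y₀,∞) × [x₀,∞) × [y₀,∞) × ℝ → ℝ be continuous, and let q, r : [x₀,∞) × [y₀,∞) → [0,∞) be continuous such that |K(x,y,η,τ,u) − K(x,y,η,τ,v)| ≤ q(x,y) r(η,τ) |u − v| for all arguments and all u, v ∈ ℝ. Let ε₁, ε₂ ≥ 0 and let u₁, u₂ : [x₀,∞) × [y₀,∞) → ℝ be continuous functions such that, for i = 1, 2 and all x ≥ x₀, y ≥ y₀, |u_i(x,y) − ( g(x,y) + ∫_{x₀}^{x} ∫_{x₀}^{s} ∫_{y₀}^{y} K(x,y,η,τ,u_i(η,τ)) dτ dη ds )| ≤ ε_i. Then for all x ≥ x₀ and y ≥ y₀, |u₁(x,y) − u₂(x,y)| ≤ (ε₁ + ε₂) · [ 1 + q(x,y) · ( ∫_{x₀}^{x} ∫_{x₀}^{s} ∫_{y₀}^{y} r(η,τ) dτ dη ds ) · exp( ∫_{x₀}^{x} ∫_{x₀}^{s} ∫_{y₀}^{y} r(η,τ) q(η,τ) dτ dη ds ) ]. -/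

import Mathlib

lemma cont_prim {f : ℝ → ℝ} (hf : Continuous f) (a : ℝ) :
    Continuous fun t => ∫ x in a..t, f x :=
  intervalIntegral.continuous_primitive (fun _ _ => hf.intervalIntegrable _ _) a

lemma prim_hasDerivAt {f : ℝ → ℝ} (hf : Continuous f) (a b : ℝ) :
    HasDerivAt (fun t => ∫ x in a..t, f x) (f b) b :=
  (hf.integral_hasStrictDerivAt a b).hasDerivAt

lemma cont_param {f : ℝ → ℝ → ℝ} (hf : Continuous fun z : ℝ × ℝ => f z.1 z.2) (a b : ℝ) :
    Continuous fun x => ∫ t in a..b, f x t :=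
  intervalIntegral.continuous_parametric_intervalIntegral_of_continuous' hf a b

lemma cont_param' {f : ℝ → ℝ → ℝ} (hf : Continuous fun z : ℝ × ℝ => f z.1 z.2) (a : ℝ) :
    Continuous fun x => ∫ t in a..x, f x t :=
  intervalIntegral.continuous_parametric_intervalIntegral_of_continuous hf continuous_id

lemma key (x₀ y₀ y : ℝ) (hy : y₀ ≤ y) (q r w : ℝ → ℝ → ℝ) (ε : ℝ) (hε : 0 ≤ ε)
    (hq : Continuous fun z : ℝ × ℝ => q z.1 z.2)
    (hr : Continuous fun z : ℝ × ℝ => r z.1 z.2)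
    (hw : Continuous fun z : ℝ × ℝ => w z.1 z.2)
    (hqn : ∀ a b, 0 ≤ q a b) (hrn : ∀ a b, 0 ≤ r a b) (hwn : ∀ a b, 0 ≤ w a b)
    (hmain : ∀ a b, x₀ ≤ a → y₀ ≤ b → b ≤ y →
      w a b ≤ ε + q a b * ∫ s in x₀..a, ∫ η in x₀..s, ∫ τ in y₀..b, r η τ * w η τ) :
    ∀ x, x₀ ≤ x → w x y ≤ ε * (1 + q x y *
      (∫ s in x₀..x, ∫ η in x₀..s, ∫ τ in y₀..y, r η τ) *
      Real.exp (∫ s in x₀..x, ∫ η in x₀..s, ∫ τ in y₀..y, r η τ * q η τ)) := by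
  -- inner integrals in τ
  set F : ℝ → ℝ := fun η => ∫ τ in y₀..y, r η τ * w η τ with hF
  set p : ℝ → ℝ := fun η => ∫ τ in y₀..y, r η τ with hp
  set m : ℝ → ℝ := fun η => ∫ τ in y₀..y, r η τ * q η τ with hm
  have hrw : Continuous fun z : ℝ × ℝ => r z.1 z.2 * w z.1 z.2 := hr.mul hw
  have hrq : Continuous fun z : ℝ × ℝ => r z.1 z.2 * q z.1 z.2 := hr.mul hq
  have hFc : Continuous F := cont_param hrw y₀ y
  have hpc : Continuous p := cont_param hr y₀ y
  have hmc : Continuous m := cont_param hrq y₀ y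
  have hFn : ∀ η, 0 ≤ F η := fun η =>
    intervalIntegral.integral_nonneg hy fun τ _ => mul_nonneg (hrn _ _) (hwn _ _)
  have hpn : ∀ η, 0 ≤ p η := fun η =>
    intervalIntegral.integral_nonneg hy fun τ _ => hrn _ _
  have hmn : ∀ η, 0 ≤ m η := fun η =>
    intervalIntegral.integral_nonneg hy fun τ _ => mul_nonneg (hrn _ _) (hqn _ _)
  -- second-level primitives
  set D : ℝ → ℝ := fun t => ∫ η in x₀..t, F η with hD
  set Pb : ℝ → ℝ := fun t => ∫ η in x₀..t, p η with hPb
  set M : ℝ → ℝ := fun t => ∫ η in x₀..t, m η with hM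
  have hDc : Continuous D := cont_prim hFc x₀
  have hPbc : Continuous Pb := cont_prim hpc x₀
  have hMc : Continuous M := cont_prim hmc x₀
  have hDn : ∀ t, x₀ ≤ t → 0 ≤ D t := fun t ht =>
    intervalIntegral.integral_nonneg ht fun η _ => hFn η
  have hPbn : ∀ t, x₀ ≤ t → 0 ≤ Pb t := fun t ht =>
    intervalIntegral.integral_nonneg ht fun η _ => hpn η
  have hMn : ∀ t, x₀ ≤ t → 0 ≤ M t := fun t ht =>
    intervalIntegral.integral_nonneg ht fun η _ => hmn η
  -- third-level primitives
  set A : ℝ → ℝ := fun t => ∫ s in x₀..t, D s with hA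
  set P : ℝ → ℝ := fun t => ∫ s in x₀..t, Pb s with hP
  set E : ℝ → ℝ := fun t => ∫ s in x₀..t, M s with hE
  have hAc : Continuous A := cont_prim hDc x₀
  have hEn : ∀ t, x₀ ≤ t → 0 ≤ E t := fun t ht =>
    intervalIntegral.integral_nonneg ht fun s hs => hMn s hs.1
  have hAmono : MonotoneOn A (Set.Ici x₀) := by
    apply monotoneOn_of_deriv_nonneg (convex_Ici x₀) hAc.continuousOn
    · intro t ht
      exact ((prim_hasDerivAt hDc x₀ t).differentiableAt).differentiableWithinAt
    · intro t ht
      rw [interior_Ici] at ht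
      rw [(prim_hasDerivAt hDc x₀ t).deriv]
      exact hDn t (le_of_lt ht)
  have hAn : ∀ t, x₀ ≤ t → 0 ≤ A t := fun t ht =>
    intervalIntegral.integral_nonneg ht fun s hs => hDn s hs.1
  -- helper: continuity in one slot
  have hr1 : ∀ a : ℝ, Continuous fun τ => r a τ := fun a =>
    hr.comp (continuous_const.prodMk continuous_id)
  have hq1 : ∀ a : ℝ, Continuous fun τ => q a τ := fun a =>
    hq.comp (continuous_const.prodMk continuous_id)
  have hw1 : ∀ a : ℝ, Continuous fun τ => w a τ := fun a =>
    hw.comp (continuous_const.prodMk continuous_id)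
  -- Claim 1
  have claim1 : ∀ a b, x₀ ≤ a → y₀ ≤ b → b ≤ y → w a b ≤ ε + q a b * A a := by
    intro a b ha hb hby
    have h := hmain a b ha hb hby
    have hTA : (∫ s in x₀..a, ∫ η in x₀..s, ∫ τ in y₀..b, r η τ * w η τ) ≤ A a := by
      have hGc : Continuous fun η => ∫ τ in y₀..b, r η τ * w η τ := cont_param hrw y₀ b
      apply intervalIntegral.integral_mono_on ha
        ((cont_prim hGc x₀).intervalIntegrable _ _) (hDc.intervalIntegrable _ _)
      intro s hs
      apply intervalIntegral.integral_mono_on hs.1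
        (hGc.intervalIntegrable _ _) (hFc.intervalIntegrable _ _)
      intro η _
      apply intervalIntegral.integral_mono_interval le_rfl hb hby
      · exact Filter.Eventually.of_forall fun τ => mul_nonneg (hrn _ _) (hwn _ _)
      · exact ((hr1 η).mul (hw1 η)).intervalIntegrable _ _
    calc w a b ≤ ε + q a b * ∫ s in x₀..a, ∫ η in x₀..s, ∫ τ in y₀..b, r η τ * w η τ := h
      _ ≤ ε + q a b * A a := by
          have := mul_le_mul_of_nonneg_left hTA (hqn a b); linarith
  -- Claim 2
  have claim2 : ∀ a, x₀ ≤ a → F a ≤ ε * p a + m a * A a := by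
    intro a ha
    have step : F a ≤ ∫ τ in y₀..y, (ε * r a τ + r a τ * q a τ * A a) := by
      apply intervalIntegral.integral_mono_on hy
        (((hr1 a).mul (hw1 a)).intervalIntegrable _ _)
        (((continuous_const.mul (hr1 a)).add
          (((hr1 a).mul (hq1 a)).mul continuous_const)).intervalIntegrable _ _)
      intro τ hτ
      have h1 := claim1 a τ ha hτ.1 hτ.2
      have := mul_le_mul_of_nonneg_left h1 (hrn a τ)
      simp only [Pi.add_apply, Pi.mul_apply]
      nlinarith
    have eq1 : (∫ τ in y₀..y, (ε * r a τ + r a τ * q a τ * A a))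
        = ε * p a + m a * A a := by
      rw [intervalIntegral.integral_add (f := fun τ => ε * r a τ) (g := fun τ => r a τ * q a τ * A a)
        ((continuous_const.mul (hr1 a)).intervalIntegrable _ _)
        ((((hr1 a).mul (hq1 a)).mul continuous_const).intervalIntegrable _ _),
        intervalIntegral.integral_mul_const, intervalIntegral.integral_const_mul]
    linarith [step, eq1.le, eq1.ge]
  -- Claim 3
  have claim3 : ∀ t, x₀ ≤ t → D t ≤ ε * Pb t + M t * A t := by
    intro t ht
    have step : D t ≤ ∫ η in x₀..t, (ε * p η + m η * A t) := by
      apply intervalIntegral.integral_mono_on ht (hFc.intervalIntegrable _ _)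
        (((continuous_const.mul hpc).add (hmc.mul continuous_const)).intervalIntegrable _ _)
      intro η hη
      have h2 := claim2 η hη.1
      have hAle : A η ≤ A t := hAmono hη.1 (le_trans hη.1 hη.2 : x₀ ≤ t) hη.2
      simp only [Pi.add_apply, Pi.mul_apply]
      nlinarith [mul_le_mul_of_nonneg_left hAle (hmn η)]
    have eq1 : (∫ η in x₀..t, (ε * p η + m η * A t)) = ε * Pb t + M t * A t := by
      rw [intervalIntegral.integral_add (f := fun η => ε * p η) (g := fun η => m η * A t)
        ((continuous_const.mul hpc).intervalIntegrable _ _)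
        ((hmc.mul continuous_const).intervalIntegrable _ _),
        intervalIntegral.integral_mul_const, intervalIntegral.integral_const_mul]
    linarith
  -- Claim 4 : Gronwall
  have claim4 : ∀ t, x₀ ≤ t → A t ≤ ε * P t * Real.exp (E t) := by
    intro t ht
    set ψ : ℝ → ℝ := fun t => ε * P t - A t * Real.exp (-E t) with hψ
    have hψderiv : ∀ s, HasDerivAt ψ
        (ε * Pb s - (D s * Real.exp (-E s) + A s * (Real.exp (-E s) * (-M s)))) s := by
      intro s
      exact ((prim_hasDerivAt hPbc x₀ s).const_mul ε).sub
        ((prim_hasDerivAt hDc x₀ s).mul ((prim_hasDerivAt hMc x₀ s).neg.exp))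
    have hψmono : MonotoneOn ψ (Set.Ici x₀) := by
      apply monotoneOn_of_deriv_nonneg (convex_Ici x₀)
        (fun s _ => (hψderiv s).continuousAt.continuousWithinAt)
        (fun s _ => (hψderiv s).differentiableAt.differentiableWithinAt)
      intro s hs
      rw [interior_Ici] at hs
      rw [(hψderiv s).deriv]
      have hs' : x₀ ≤ s := le_of_lt hs
      have h3 := claim3 s hs'
      have he1 : Real.exp (-E s) ≤ 1 := by
        rw [Real.exp_le_one_iff]; linarith [hEn s hs']
      have he0 : 0 < Real.exp (-E s) := Real.exp_pos _
      have hPb0 := hPbn s hs'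
      have hMA : 0 ≤ M s * A s := mul_nonneg (hMn s hs') (hAn s hs')
      nlinarith [mul_le_mul_of_nonneg_right (show D s - M s * A s ≤ ε * Pb s by linarith)
        he0.le, mul_nonneg (mul_nonneg hε hPb0) (sub_nonneg.2 he1)]
    have hψ0 : ψ x₀ = 0 := by
      simp [hψ, hA, hP, intervalIntegral.integral_same]
    have := hψmono (Set.self_mem_Ici) (Set.mem_Ici.2 ht) ht
    rw [hψ0] at this
    have h5 : A t * Real.exp (-E t) ≤ ε * P t := by simpa [hψ] using this
    have := mul_le_mul_of_nonneg_right h5 (Real.exp_pos (E t)).le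
    calc A t = A t * Real.exp (-E t) * Real.exp (E t) := by
          rw [mul_assoc, ← Real.exp_add]; simp
      _ ≤ ε * P t * Real.exp (E t) := this
  intro x hx
  have h1 := claim1 x y hx hy le_rfl
  have h4 := claim4 x hx
  have hq0 := hqn x y
  calc w x y ≤ ε + q x y * A x := h1
    _ ≤ ε + q x y * (ε * P x * Real.exp (E x)) := by
        have := mul_le_mul_of_nonneg_left h4 hq0; linarith
    _ = ε * (1 + q x y * P x * Real.exp (E x)) := by ring

lemma triple_congr {x₀ y₀ x y : ℝ} (hx : x₀ ≤ x) (hy : y₀ ≤ y) {f g : ℝ → ℝ → ℝ}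
    (h : ∀ η τ, x₀ ≤ η → y₀ ≤ τ → f η τ = g η τ) :
    (∫ s in x₀..x, ∫ η in x₀..s, ∫ τ in y₀..y, f η τ)
      = ∫ s in x₀..x, ∫ η in x₀..s, ∫ τ in y₀..y, g η τ := by
  apply intervalIntegral.integral_congr; intro s hs
  rw [Set.uIcc_of_le hx] at hs
  apply intervalIntegral.integral_congr; intro η hη
  rw [Set.uIcc_of_le hs.1] at hη
  apply intervalIntegral.integral_congr; intro τ hτ
  rw [Set.uIcc_of_le hy] at hτ
  exact h η τ hη.1 hτ.1

/-- Continuous (𝕋₁ = 𝕋₂ = ℝ) case of Theorem 3.2: closeness of two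
ε-approximate solutions of the integral equation
u(x,y) = g(x,y) + ∫∫∫ K(x,y,η,τ,u(η,τ)). -/
theorem stmt_10 (x₀ y₀ : ℝ) (g : ℝ → ℝ → ℝ) (K : ℝ → ℝ → ℝ → ℝ → ℝ → ℝ)
    (q r : ℝ → ℝ → ℝ) (ε₁ ε₂ : ℝ) (u₁ u₂ : ℝ → ℝ → ℝ)
    (hg_cont : ContinuousOn (fun z : ℝ × ℝ => g z.1 z.2) (Set.Ici x₀ ×ˢ Set.Ici y₀))
    (hK_cont : ContinuousOn
      (fun z : ℝ × ℝ × ℝ × ℝ × ℝ => K z.1 z.2.1 z.2.2.1 z.2.2.2.1 z.2.2.2.2)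
      (Set.Ici x₀ ×ˢ Set.Ici y₀ ×ˢ Set.Ici x₀ ×ˢ Set.Ici y₀ ×ˢ (Set.univ : Set ℝ)))
    (hq_cont : ContinuousOn (fun z : ℝ × ℝ => q z.1 z.2) (Set.Ici x₀ ×ˢ Set.Ici y₀))
    (hr_cont : ContinuousOn (fun z : ℝ × ℝ => r z.1 z.2) (Set.Ici x₀ ×ˢ Set.Ici y₀))
    (hq_nonneg : ∀ x y, x₀ ≤ x → y₀ ≤ y → 0 ≤ q x y)
    (hr_nonneg : ∀ x y, x₀ ≤ x → y₀ ≤ y → 0 ≤ r x y)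
    (hK_lip : ∀ x y η τ, x₀ ≤ x → y₀ ≤ y → x₀ ≤ η → y₀ ≤ τ → ∀ a b : ℝ,
      |K x y η τ a - K x y η τ b| ≤ q x y * r η τ * |a - b|)
    (hε₁ : 0 ≤ ε₁) (hε₂ : 0 ≤ ε₂)
    (hu₁_cont : ContinuousOn (fun z : ℝ × ℝ => u₁ z.1 z.2) (Set.Ici x₀ ×ˢ Set.Ici y₀))
    (hu₂_cont : ContinuousOn (fun z : ℝ × ℝ => u₂ z.1 z.2) (Set.Ici x₀ ×ˢ Set.Ici y₀))
    (hu₁_approx : ∀ x y, x₀ ≤ x → y₀ ≤ y →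
      |u₁ x y - (g x y + ∫ s in x₀..x, ∫ η in x₀..s, ∫ τ in y₀..y,
        K x y η τ (u₁ η τ))| ≤ ε₁)
    (hu₂_approx : ∀ x y, x₀ ≤ x → y₀ ≤ y →
      |u₂ x y - (g x y + ∫ s in x₀..x, ∫ η in x₀..s, ∫ τ in y₀..y,
        K x y η τ (u₂ η τ))| ≤ ε₂) :
    ∀ x y, x₀ ≤ x → y₀ ≤ y →
      |u₁ x y - u₂ x y| ≤ (ε₁ + ε₂) *
        (1 + q x y * (∫ s in x₀..x, ∫ η in x₀..s, ∫ τ in y₀..y, r η τ) *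
          Real.exp (∫ s in x₀..x, ∫ η in x₀..s, ∫ τ in y₀..y, r η τ * q η τ)) := by
  intro x y hx hy
  -- clamped versions, globally continuous
  set Q : ℝ → ℝ → ℝ := fun a b => q (max a x₀) (max b y₀) with hQdef
  set R : ℝ → ℝ → ℝ := fun a b => r (max a x₀) (max b y₀) with hRdef
  set U₁ : ℝ → ℝ → ℝ := fun a b => u₁ (max a x₀) (max b y₀) with hU₁def
  set U₂ : ℝ → ℝ → ℝ := fun a b => u₂ (max a x₀) (max b y₀) with hU₂def
  set W : ℝ → ℝ → ℝ := fun a b => |U₁ a b - U₂ a b| with hWdef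
  set K' : ℝ → ℝ → ℝ → ℝ → ℝ → ℝ :=
    fun X Y a b v => K (max X x₀) (max Y y₀) (max a x₀) (max b y₀) v with hK'def
  have hclamp : Continuous fun z : ℝ × ℝ => ((max z.1 x₀ : ℝ), (max z.2 y₀ : ℝ)) :=
    (continuous_fst.max continuous_const).prodMk (continuous_snd.max continuous_const)
  have hmem : ∀ z : ℝ × ℝ, ((max z.1 x₀ : ℝ), (max z.2 y₀ : ℝ)) ∈
      Set.Ici x₀ ×ˢ Set.Ici y₀ := fun z => ⟨Set.mem_Ici.2 (le_max_right _ _), Set.mem_Ici.2 (le_max_right _ _)⟩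
  have hQ : Continuous fun z : ℝ × ℝ => Q z.1 z.2 :=
    hq_cont.comp_continuous hclamp hmem
  have hR : Continuous fun z : ℝ × ℝ => R z.1 z.2 :=
    hr_cont.comp_continuous hclamp hmem
  have hU₁ : Continuous fun z : ℝ × ℝ => U₁ z.1 z.2 :=
    hu₁_cont.comp_continuous hclamp hmem
  have hU₂ : Continuous fun z : ℝ × ℝ => U₂ z.1 z.2 :=
    hu₂_cont.comp_continuous hclamp hmem
  have hW : Continuous fun z : ℝ × ℝ => W z.1 z.2 := (hU₁.sub hU₂).abs
  have hK' : Continuous fun z : ℝ × ℝ × ℝ × ℝ × ℝ =>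
      K' z.1 z.2.1 z.2.2.1 z.2.2.2.1 z.2.2.2.2 := by
    have hcl5 : Continuous fun z : ℝ × ℝ × ℝ × ℝ × ℝ =>
        ((max z.1 x₀ : ℝ), (max z.2.1 y₀ : ℝ), (max z.2.2.1 x₀ : ℝ),
          (max z.2.2.2.1 y₀ : ℝ), z.2.2.2.2) :=
      (continuous_fst.max continuous_const).prodMk
        (((continuous_snd.fst).max continuous_const).prodMk
        (((continuous_snd.snd.fst).max continuous_const).prodMk
        (((continuous_snd.snd.snd.fst).max continuous_const).prodMk
        continuous_snd.snd.snd.snd)))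
    exact hK_cont.comp_continuous hcl5 fun z => ⟨Set.mem_Ici.2 (le_max_right _ _), Set.mem_Ici.2 (le_max_right _ _),
      Set.mem_Ici.2 (le_max_right _ _), Set.mem_Ici.2 (le_max_right _ _), Set.mem_univ _⟩
  have hQn : ∀ a b, 0 ≤ Q a b := fun a b =>
    hq_nonneg _ _ (le_max_right _ _) (le_max_right _ _)
  have hRn : ∀ a b, 0 ≤ R a b := fun a b =>
    hr_nonneg _ _ (le_max_right _ _) (le_max_right _ _)
  have hWn : ∀ a b, 0 ≤ W a b := fun a b => abs_nonneg _
  -- Lipschitz for clamped K'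
  have hK'lip : ∀ X Y a b (v₁ v₂ : ℝ),
      |K' X Y a b v₁ - K' X Y a b v₂| ≤ Q X Y * R a b * |v₁ - v₂| := fun X Y a b v₁ v₂ =>
    hK_lip _ _ _ _ (le_max_right _ _) (le_max_right _ _) (le_max_right _ _)
      (le_max_right _ _) v₁ v₂
  -- main integral inequality for W
  have hmain : ∀ a b, x₀ ≤ a → y₀ ≤ b → b ≤ y →
      W a b ≤ (ε₁ + ε₂) + Q a b *
        ∫ s in x₀..a, ∫ η in x₀..s, ∫ τ in y₀..b, R η τ * W η τ := by
    intro a b ha hb _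
    have e1 := hu₁_approx a b ha hb
    have e2 := hu₂_approx a b ha hb
    set I₁ : ℝ := ∫ s in x₀..a, ∫ η in x₀..s, ∫ τ in y₀..b, K a b η τ (u₁ η τ) with hI₁
    set I₂ : ℝ := ∫ s in x₀..a, ∫ η in x₀..s, ∫ τ in y₀..b, K a b η τ (u₂ η τ) with hI₂
    -- continuity of the clamped integrands
    have hker₁ : Continuous fun z : ℝ × ℝ => K' a b z.1 z.2 (U₁ z.1 z.2) :=
      hK'.comp (continuous_const.prodMk (continuous_const.prodMk
        (continuous_fst.prodMk (continuous_snd.prodMk hU₁))))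
    have hker₂ : Continuous fun z : ℝ × ℝ => K' a b z.1 z.2 (U₂ z.1 z.2) :=
      hK'.comp (continuous_const.prodMk (continuous_const.prodMk
        (continuous_fst.prodMk (continuous_snd.prodMk hU₂))))
    have hRW : Continuous fun z : ℝ × ℝ => R z.1 z.2 * W z.1 z.2 := hR.mul hW
    -- one–variable sections
    set Y₁ : ℝ → ℝ := fun η => ∫ τ in y₀..b, K' a b η τ (U₁ η τ) with hY₁
    set Y₂ : ℝ → ℝ := fun η => ∫ τ in y₀..b, K' a b η τ (U₂ η τ) with hY₂
    set Zd : ℝ → ℝ := fun η => ∫ τ in y₀..b,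
      (K' a b η τ (U₁ η τ) - K' a b η τ (U₂ η τ)) with hZd
    have hY₁c : Continuous Y₁ := cont_param hker₁ y₀ b
    have hY₂c : Continuous Y₂ := cont_param hker₂ y₀ b
    have hZdc : Continuous Zd := cont_param (hker₁.sub hker₂) y₀ b
    have hk1 : ∀ η : ℝ, Continuous fun τ => K' a b η τ (U₁ η τ) := fun η =>
      hker₁.comp (continuous_const.prodMk continuous_id)
    have hk2 : ∀ η : ℝ, Continuous fun τ => K' a b η τ (U₂ η τ) := fun η =>
      hker₂.comp (continuous_const.prodMk continuous_id)
    have hYdiff : ∀ η, Y₁ η - Y₂ η = Zd η := fun η =>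
      (intervalIntegral.integral_sub ((hk1 η).intervalIntegrable _ _)
        ((hk2 η).intervalIntegrable _ _)).symm
    set X₁ : ℝ → ℝ := fun s => ∫ η in x₀..s, Y₁ η with hX₁
    set X₂ : ℝ → ℝ := fun s => ∫ η in x₀..s, Y₂ η with hX₂
    set Z : ℝ → ℝ := fun s => ∫ η in x₀..s, Zd η with hZ
    have hX₁c : Continuous X₁ := cont_prim hY₁c x₀
    have hX₂c : Continuous X₂ := cont_prim hY₂c x₀
    have hZc : Continuous Z := cont_prim hZdc x₀
    have hXdiff : ∀ s, X₁ s - X₂ s = Z s := by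
      intro s
      rw [hX₁, hX₂, hZ, ← intervalIntegral.integral_sub
        (hY₁c.intervalIntegrable _ _) (hY₂c.intervalIntegrable _ _)]
      exact intervalIntegral.integral_congr fun η _ => hYdiff η
    -- rewrite the original integrals as clamped ones
    have congr₁ : I₁ = ∫ s in x₀..a, X₁ s := by
      refine (triple_congr ha hb fun η τ hη hτ => ?_)
      simp only [hK'def, hU₁def, max_eq_left ha, max_eq_left hb,
        max_eq_left hη, max_eq_left hτ]
    have congr₂ : I₂ = ∫ s in x₀..a, X₂ s := by
      refine (triple_congr ha hb fun η τ hη hτ => ?_)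
      simp only [hK'def, hU₂def, max_eq_left ha, max_eq_left hb,
        max_eq_left hη, max_eq_left hτ]
    have hIdiff : I₁ - I₂ = ∫ s in x₀..a, Z s := by
      rw [congr₁, congr₂, ← intervalIntegral.integral_sub
        (hX₁c.intervalIntegrable _ _) (hX₂c.intervalIntegrable _ _)]
      exact intervalIntegral.integral_congr fun s _ => hXdiff s
    -- pointwise bound on the innermost difference
    have hZd_bound : ∀ η : ℝ, |Zd η| ≤ Q a b * ∫ τ in y₀..b, R η τ * W η τ := by
      intro η
      calc |Zd η| ≤ ∫ τ in y₀..b, |K' a b η τ (U₁ η τ) - K' a b η τ (U₂ η τ)| :=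
            intervalIntegral.abs_integral_le_integral_abs hb
        _ ≤ ∫ τ in y₀..b, Q a b * (R η τ * W η τ) := by
            apply intervalIntegral.integral_mono_on hb
              (((hk1 η).sub (hk2 η)).abs.intervalIntegrable _ _)
              ((continuous_const.mul ((hRW.comp
                (continuous_const.prodMk continuous_id) :
                Continuous fun τ => R η τ * W η τ))).intervalIntegrable _ _)
            intro τ _
            have := hK'lip a b η τ (U₁ η τ) (U₂ η τ)
            calc |K' a b η τ (U₁ η τ) - K' a b η τ (U₂ η τ)|
                ≤ Q a b * R η τ * |U₁ η τ - U₂ η τ| := this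
              _ = Q a b * (R η τ * W η τ) := by rw [hWdef]; ring
        _ = Q a b * ∫ τ in y₀..b, R η τ * W η τ := by
            rw [intervalIntegral.integral_const_mul]
    have hRWc1 : Continuous fun η => ∫ τ in y₀..b, R η τ * W η τ := cont_param hRW y₀ b
    have hZ_bound : ∀ s, x₀ ≤ s →
        |Z s| ≤ Q a b * ∫ η in x₀..s, ∫ τ in y₀..b, R η τ * W η τ := by
      intro s hs
      calc |Z s| ≤ ∫ η in x₀..s, |Zd η| :=
            intervalIntegral.abs_integral_le_integral_abs hs
        _ ≤ ∫ η in x₀..s, Q a b * ∫ τ in y₀..b, R η τ * W η τ := by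
            apply intervalIntegral.integral_mono_on hs
              (hZdc.abs.intervalIntegrable _ _)
              ((continuous_const.mul hRWc1).intervalIntegrable _ _)
            exact fun η _ => hZd_bound η
        _ = Q a b * ∫ η in x₀..s, ∫ τ in y₀..b, R η τ * W η τ := by
            rw [intervalIntegral.integral_const_mul]
    have hRWc2 : Continuous fun s => ∫ η in x₀..s, ∫ τ in y₀..b, R η τ * W η τ :=
      cont_prim hRWc1 x₀
    have hI_bound : |I₁ - I₂| ≤ Q a b *
        ∫ s in x₀..a, ∫ η in x₀..s, ∫ τ in y₀..b, R η τ * W η τ := by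
      rw [hIdiff]
      calc |∫ s in x₀..a, Z s| ≤ ∫ s in x₀..a, |Z s| :=
            intervalIntegral.abs_integral_le_integral_abs ha
        _ ≤ ∫ s in x₀..a, Q a b * ∫ η in x₀..s, ∫ τ in y₀..b, R η τ * W η τ := by
            apply intervalIntegral.integral_mono_on ha
              (hZc.abs.intervalIntegrable _ _)
              ((continuous_const.mul hRWc2).intervalIntegrable _ _)
            exact fun s hs => hZ_bound s hs.1
        _ = Q a b * ∫ s in x₀..a, ∫ η in x₀..s, ∫ τ in y₀..b, R η τ * W η τ := by
            rw [intervalIntegral.integral_const_mul]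
    -- assemble
    have hWab : W a b = |u₁ a b - u₂ a b| := by
      simp only [hWdef, hU₁def, hU₂def, max_eq_left ha, max_eq_left hb]
    have htri : |u₁ a b - u₂ a b| ≤ ε₁ + ε₂ + |I₁ - I₂| := by
      have hdec : u₁ a b - u₂ a b =
          (u₁ a b - (g a b + I₁)) - (u₂ a b - (g a b + I₂)) + (I₁ - I₂) := by ring
      rw [hdec]
      calc |(u₁ a b - (g a b + I₁)) - (u₂ a b - (g a b + I₂)) + (I₁ - I₂)|
          ≤ |(u₁ a b - (g a b + I₁)) - (u₂ a b - (g a b + I₂))| + |I₁ - I₂| :=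
            abs_add_le _ _
        _ ≤ |u₁ a b - (g a b + I₁)| + |u₂ a b - (g a b + I₂)| + |I₁ - I₂| := by
            have := abs_sub (u₁ a b - (g a b + I₁)) (u₂ a b - (g a b + I₂))
            linarith
        _ ≤ ε₁ + ε₂ + |I₁ - I₂| := by linarith
    rw [hWab]
    linarith
  have hker := key x₀ y₀ y hy Q R W (ε₁ + ε₂) (by linarith) hQ hR hW hQn hRn hWn hmain
  have hfin := hker x hx
  -- translate back
  have hWxy : W x y = |u₁ x y - u₂ x y| := by
    simp only [hWdef, hU₁def, hU₂def, max_eq_left hx, max_eq_left hy]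
  have hQxy : Q x y = q x y := by simp only [hQdef, max_eq_left hx, max_eq_left hy]
  have hRint : (∫ s in x₀..x, ∫ η in x₀..s, ∫ τ in y₀..y, R η τ)
      = ∫ s in x₀..x, ∫ η in x₀..s, ∫ τ in y₀..y, r η τ :=
    triple_congr hx hy fun η τ hη hτ => by
      simp only [hRdef, max_eq_left hη, max_eq_left hτ]
  have hRQint : (∫ s in x₀..x, ∫ η in x₀..s, ∫ τ in y₀..y, R η τ * Q η τ)
      = ∫ s in x₀..x, ∫ η in x₀..s, ∫ τ in y₀..y, r η τ * q η τ :=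
    triple_congr hx hy fun η τ hη hτ => by
      simp only [hRdef, hQdef, max_eq_left hη, max_eq_left hτ]
  rw [hWxy, hQxy, hRint, hRQint] at hfin
  linarith
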